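/- (Theorem 1) For all real numbers s, t, u, v, one has τ(s,t)·τ(u,v) ≥ [τ((s+u)/2, (t+v)/2) − τ((s+v)/2, (t+u)/2)]², where τ(s,t) := λ_s − 2λ_{(s+t)/2} + λ_t. -/

import Mathlib

open MeasureTheory

/-- The moment difference `λ_s(X)` of a positive random variable `X`. -/
noncomputable def momentLambda {Ω : Type*} [MeasurableSpace Ω] (μ : Measure Ω) (X : Ω → ℝ)
    (s : ℝ) : ℝ :=
  if s = 0 then Real.log (∫ ω, X ω ∂μ) - ∫ ω, Real.log (X ω) ∂μ
  else if s = 1 then (∫ ω, X ω * Real.log (X ω) ∂μ) - (∫ ω, X ω ∂μ) * Real.log (∫ ω, X ω ∂μ)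
  else ((∫ ω, X ω ^ s ∂μ) - (∫ ω, X ω ∂μ) ^ s) / (s * (s - 1))

/-- `τ(s,t) := λ_s - 2λ_{(s+t)/2} + λ_t`. -/
noncomputable def momentTau {Ω : Type*} [MeasurableSpace Ω] (μ : Measure Ω) (X : Ω → ℝ)
    (s t : ℝ) : ℝ :=
  momentLambda μ X s - 2 * momentLambda μ X ((s + t) / 2) + momentLambda μ X t

noncomputable def Phi (p x : ℝ) : ℝ :=
  if p = 0 then -Real.log x else if p = 1 then x * Real.log x else x ^ p / (p * (p - 1))

noncomputable def dPhi (p a : ℝ) : ℝ :=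
  if p = 0 then -a⁻¹ else if p = 1 then Real.log a + 1 else a ^ (p - 1) / (p - 1)

lemma cpos {a x : ℝ} (ha : 0 < a) (hx : 0 < x) {r : ℝ} (hr : r ∈ Set.uIcc (0:ℝ) 1) :
    0 < a + r * (x - a) := by
  rw [Set.uIcc_of_le (by norm_num)] at hr
  have h1 : a + r * (x - a) = (1 - r) * a + r * x := by ring
  rw [h1]
  rcases hr with ⟨h0, h1'⟩
  rcases eq_or_lt_of_le h0 with h | h
  · simp [← h]; linarith
  · nlinarith

lemma gcont {a x : ℝ} (ha : 0 < a) (hx : 0 < x) (p : ℝ) :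
    IntervalIntegrable (fun r => (x - a) ^ 2 * (1 - r) * (a + r * (x - a)) ^ (p - 2))
      MeasureTheory.volume 0 1 := by
  apply ContinuousOn.intervalIntegrable
  apply ContinuousOn.mul
  · exact (continuous_const.mul (continuous_const.sub continuous_id)).continuousOn
  · exact ContinuousOn.rpow_const (by fun_prop)
      (fun r hr => Or.inl (cpos ha hx hr).ne')

lemma key (a x : ℝ) (ha : 0 < a) (hx : 0 < x) (p : ℝ) :
    (∫ r in (0:ℝ)..1, (x - a) ^ 2 * (1 - r) * (a + r * (x - a)) ^ (p - 2))
      = Phi p x - Phi p a - dPhi p a * (x - a) := by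
  by_cases hd0 : x - a = 0
  · have hxa : x = a := by linarith [hd0]
    simp [hd0, hxa]
  set d := x - a with hd
  have hlin : ∀ r : ℝ, HasDerivAt (fun r : ℝ => a + r * d) d r := by
    intro r
    simpa using ((hasDerivAt_id r).mul_const d).const_add a
  by_cases hp0 : p = 0
  · subst hp0
    have hfd : ∀ r ∈ Set.uIcc (0:ℝ) 1,
        HasDerivAt (fun r : ℝ => -Real.log (a + r * d) - (1 - r) * d / (a + r * d))
          (d ^ 2 * (1 - r) * (a + r * d) ^ ((0:ℝ) - 2)) r := by
      intro r hr
      have hc := cpos ha hx hr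
      have h1 : HasDerivAt (fun r : ℝ => -Real.log (a + r * d)) (-(d / (a + r * d))) r :=
        ((hlin r).log hc.ne').neg
      have h2 : HasDerivAt (fun r : ℝ => (1 - r) * d / (a + r * d))
          (((-1 : ℝ) * d * (a + r * d) - (1 - r) * d * d) / (a + r * d) ^ 2) r := by
        exact (((hasDerivAt_id r).const_sub 1).mul_const d).div (hlin r) hc.ne'
      have := h1.sub h2
      refine this.congr_deriv ?_
      have hrp : (a + r * d) ^ ((0:ℝ) - 2) = ((a + r * d) ^ 2)⁻¹ := by
        rw [show ((0:ℝ) - 2) = -(2:ℝ) by ring, Real.rpow_neg hc.le,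
          show (2:ℝ) = ((2:ℕ):ℝ) by norm_num, Real.rpow_natCast]
      rw [hrp]
      field_simp
      ring
    rw [intervalIntegral.integral_eq_sub_of_hasDerivAt hfd (gcont ha hx 0)]
    simp only [Phi, dPhi, if_pos rfl, ↓reduceIte]
    have : a + 1 * d = x := by rw [hd]; ring
    rw [this]
    field_simp [ha.ne']
    ring
  by_cases hp1 : p = 1
  · subst hp1
    have hfd : ∀ r ∈ Set.uIcc (0:ℝ) 1,
        HasDerivAt (fun r : ℝ => (a + r * d) * Real.log (a + r * d)
            + (1 - r) * d * Real.log (a + r * d) - d * r)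
          (d ^ 2 * (1 - r) * (a + r * d) ^ ((1:ℝ) - 2)) r := by
      intro r hr
      have hc := cpos ha hx hr
      have h1 : HasDerivAt (fun r : ℝ => (a + r * d) * Real.log (a + r * d))
          (d * Real.log (a + r * d) + (a + r * d) * (d / (a + r * d))) r :=
        (hlin r).mul ((hlin r).log hc.ne')
      have h2 : HasDerivAt (fun r : ℝ => (1 - r) * d * Real.log (a + r * d))
          ((-1 * d) * Real.log (a + r * d) + ((1 - r) * d) * (d / (a + r * d))) r :=
        (((hasDerivAt_id r).const_sub 1).mul_const d).mul ((hlin r).log hc.ne')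
      have h3 : HasDerivAt (fun r : ℝ => d * r) (d * 1) r := (hasDerivAt_id r).const_mul d
      have := (h1.add h2).sub h3
      refine this.congr_deriv ?_
      rw [show ((1:ℝ) - 2) = -(1:ℝ) by ring, Real.rpow_neg hc.le, Real.rpow_one]
      rw [mul_div_cancel₀ d (show a + r * d ≠ 0 from hc.ne')]
      ring
    rw [intervalIntegral.integral_eq_sub_of_hasDerivAt hfd (gcont ha hx 1)]
    have h5 : a + 1 * d = x := by rw [hd]; ring
    have h6 : a + 0 * d = a := by ring
    rw [h5, h6]
    norm_num [Phi, dPhi]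
    ring
  · have hfd : ∀ r ∈ Set.uIcc (0:ℝ) 1,
        HasDerivAt (fun r : ℝ => (a + r * d) ^ p / (p * (p - 1))
            + (1 - r) * d * (a + r * d) ^ (p - 1) / (p - 1))
          (d ^ 2 * (1 - r) * (a + r * d) ^ (p - 2)) r := by
      intro r hr
      have hc := cpos ha hx hr
      have h1 : HasDerivAt (fun r : ℝ => (a + r * d) ^ p / (p * (p - 1)))
          ((d * p * (a + r * d) ^ (p - 1)) / (p * (p - 1))) r :=
        ((hlin r).rpow_const (Or.inl hc.ne')).div_const _
      have h2 : HasDerivAt (fun r : ℝ => (1 - r) * d * (a + r * d) ^ (p - 1) / (p - 1))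
          (((-1 * d) * (a + r * d) ^ (p - 1)
            + ((1 - r) * d) * (d * (p - 1) * (a + r * d) ^ (p - 1 - 1))) / (p - 1)) r :=
        ((((hasDerivAt_id r).const_sub 1).mul_const d).mul
          ((hlin r).rpow_const (Or.inl hc.ne'))).div_const _
      rw [show p - 1 - 1 = p - 2 by ring] at h2
      have := h1.add h2
      refine this.congr_deriv ?_
      have hp1' : p - 1 ≠ 0 := fun h => hp1 (by linarith)
      field_simp
      ring
    rw [intervalIntegral.integral_eq_sub_of_hasDerivAt hfd (gcont ha hx p)]
    simp only [Phi, dPhi, if_neg hp0, if_neg hp1]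
    have h5 : a + 1 * d = x := by rw [hd]; ring
    have h6 : a + 0 * d = a := by ring
    rw [h5, h6]
    have hp1' : p - 1 ≠ 0 := fun h => hp1 (by linarith)
    field_simp
    ring

lemma quad_nonneg (a x : ℝ) (ha : 0 < a) (hx : 0 < x) (l s t u v : ℝ) :
    0 ≤ (l * l) * ((∫ r in (0:ℝ)..1, (x - a) ^ 2 * (1 - r) * (a + r * (x - a)) ^ (s - 2))
          - 2 * (∫ r in (0:ℝ)..1, (x - a) ^ 2 * (1 - r) * (a + r * (x - a)) ^ ((s + t) / 2 - 2))
          + ∫ r in (0:ℝ)..1, (x - a) ^ 2 * (1 - r) * (a + r * (x - a)) ^ (t - 2))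
        + (2 * l) * (((∫ r in (0:ℝ)..1, (x - a) ^ 2 * (1 - r) * (a + r * (x - a)) ^ ((s + u) / 2 - 2))
            - 2 * (∫ r in (0:ℝ)..1, (x - a) ^ 2 * (1 - r) * (a + r * (x - a)) ^ (((s + u) / 2 + (t + v) / 2) / 2 - 2))
            + ∫ r in (0:ℝ)..1, (x - a) ^ 2 * (1 - r) * (a + r * (x - a)) ^ ((t + v) / 2 - 2))
          - ((∫ r in (0:ℝ)..1, (x - a) ^ 2 * (1 - r) * (a + r * (x - a)) ^ ((s + v) / 2 - 2))
            - 2 * (∫ r in (0:ℝ)..1, (x - a) ^ 2 * (1 - r) * (a + r * (x - a)) ^ (((s + v) / 2 + (t + u) / 2) / 2 - 2))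
            + ∫ r in (0:ℝ)..1, (x - a) ^ 2 * (1 - r) * (a + r * (x - a)) ^ ((t + u) / 2 - 2)))
        + ((∫ r in (0:ℝ)..1, (x - a) ^ 2 * (1 - r) * (a + r * (x - a)) ^ (u - 2))
          - 2 * (∫ r in (0:ℝ)..1, (x - a) ^ 2 * (1 - r) * (a + r * (x - a)) ^ ((u + v) / 2 - 2))
          + ∫ r in (0:ℝ)..1, (x - a) ^ 2 * (1 - r) * (a + r * (x - a)) ^ (v - 2)) := by
  have hadd : ∀ p1 p2 p3 : ℝ,
      (∫ r in (0:ℝ)..1, (x - a) ^ 2 * (1 - r) * (a + r * (x - a)) ^ (p1 - 2))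
        - 2 * (∫ r in (0:ℝ)..1, (x - a) ^ 2 * (1 - r) * (a + r * (x - a)) ^ (p2 - 2))
        + (∫ r in (0:ℝ)..1, (x - a) ^ 2 * (1 - r) * (a + r * (x - a)) ^ (p3 - 2))
      = ∫ r in (0:ℝ)..1, ((x - a) ^ 2 * (1 - r) * (a + r * (x - a)) ^ (p1 - 2)
          - 2 * ((x - a) ^ 2 * (1 - r) * (a + r * (x - a)) ^ (p2 - 2))
          + (x - a) ^ 2 * (1 - r) * (a + r * (x - a)) ^ (p3 - 2)) := by
    intro p1 p2 p3
    rw [intervalIntegral.integral_add (((gcont ha hx p1)).sub ((gcont ha hx p2).const_mul 2))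
        (gcont ha hx p3),
      intervalIntegral.integral_sub (gcont ha hx p1) ((gcont ha hx p2).const_mul 2),
      intervalIntegral.integral_const_mul]
  have hJ : ∀ p1 p2 p3 : ℝ, IntervalIntegrable
      (fun r => (x - a) ^ 2 * (1 - r) * (a + r * (x - a)) ^ (p1 - 2)
          - 2 * ((x - a) ^ 2 * (1 - r) * (a + r * (x - a)) ^ (p2 - 2))
          + (x - a) ^ 2 * (1 - r) * (a + r * (x - a)) ^ (p3 - 2)) MeasureTheory.volume 0 1 :=
    fun p1 p2 p3 => ((gcont ha hx p1).sub ((gcont ha hx p2).const_mul 2)).add (gcont ha hx p3)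
  rw [hadd s ((s+t)/2) t, hadd ((s+u)/2) (((s+u)/2+(t+v)/2)/2) ((t+v)/2),
    hadd ((s+v)/2) (((s+v)/2+(t+u)/2)/2) ((t+u)/2), hadd u ((u+v)/2) v,
    ← intervalIntegral.integral_const_mul (l*l),
    ← intervalIntegral.integral_sub (hJ _ _ _) (hJ _ _ _),
    ← intervalIntegral.integral_const_mul (2*l),
    ← intervalIntegral.integral_add (((hJ s ((s+t)/2) t).const_mul (l*l)))
      (((hJ _ _ _).sub (hJ _ _ _)).const_mul (2*l)),
    ← intervalIntegral.integral_add ((((hJ s ((s+t)/2) t).const_mul (l*l))).add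
      (((hJ _ _ _).sub (hJ _ _ _)).const_mul (2*l))) (hJ u ((u+v)/2) v)]
  apply intervalIntegral.integral_nonneg (by norm_num : (0:ℝ) ≤ 1)
  intro r hr
  have hc : 0 < a + r * (x - a) := cpos ha hx (by rwa [Set.uIcc_of_le (by norm_num)])
  have hw : 0 ≤ (x - a) ^ 2 * (1 - r) := mul_nonneg (sq_nonneg _) (by linarith [hr.2])
  rw [show ((s+u)/2 + (t+v)/2)/2 = ((s+v)/2 + (t+u)/2)/2 by ring,
    show s - 2 = (s/2-1) + (s/2-1) by ring,
    show t - 2 = (t/2-1) + (t/2-1) by ring,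
    show u - 2 = (u/2-1) + (u/2-1) by ring,
    show v - 2 = (v/2-1) + (v/2-1) by ring,
    show (s+t)/2 - 2 = (s/2-1) + (t/2-1) by ring,
    show (u+v)/2 - 2 = (u/2-1) + (v/2-1) by ring,
    show (s+u)/2 - 2 = (s/2-1) + (u/2-1) by ring,
    show (t+v)/2 - 2 = (t/2-1) + (v/2-1) by ring,
    show (s+v)/2 - 2 = (s/2-1) + (v/2-1) by ring,
    show (t+u)/2 - 2 = (t/2-1) + (u/2-1) by ring]
  simp only [Real.rpow_add hc]
  have hkey := mul_nonneg hw (sq_nonneg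
    (l * ((a + r * (x - a)) ^ (s/2-1) - (a + r * (x - a)) ^ (t/2-1))
      + ((a + r * (x - a)) ^ (u/2-1) - (a + r * (x - a)) ^ (v/2-1))))
  nlinarith [hkey]

theorem theorem1 {Ω : Type*} [MeasurableSpace Ω] (μ : Measure Ω) [IsProbabilityMeasure μ]
    (X : Ω → ℝ) (hX : Measurable X) (hpos : ∀ᵐ ω ∂μ, 0 < X ω)
    (hmom : ∀ s : ℝ, Integrable (fun ω => X ω ^ s) μ)
    (hlog : Integrable (fun ω => Real.log (X ω)) μ)
    (hxlog : Integrable (fun ω => X ω * Real.log (X ω)) μ)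
    (s t u v : ℝ) :
    momentTau μ X s t * momentTau μ X u v ≥
      (momentTau μ X ((s + u) / 2) ((t + v) / 2) -
        momentTau μ X ((s + v) / 2) ((t + u) / 2)) ^ 2 := by
  have hXint : Integrable X μ := by simpa [Real.rpow_one] using hmom 1
  set a := ∫ ω, X ω ∂μ with ha_def
  have ha : 0 < a := by
    rw [ha_def, integral_pos_iff_support_of_nonneg_ae (hpos.mono fun ω h => h.le) hXint]
    have h2 : 0 < μ {ω | 0 < X ω} := by
      by_contra h
      push_neg at h
      have h0 : μ {ω | 0 < X ω} = 0 := le_antisymm h zero_le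
      have h1 : μ {ω | ¬ 0 < X ω} = 0 := ae_iff.mp hpos
      have huniv : μ Set.univ ≤ μ {ω | 0 < X ω} + μ {ω | ¬ 0 < X ω} := by
        refine le_trans (measure_mono ?_) (measure_union_le _ _)
        intro ω _
        by_cases hh : 0 < X ω
        · exact Or.inl hh
        · exact Or.inr hh
      rw [h0, h1, measure_univ] at huniv
      simp at huniv
    exact lt_of_lt_of_le h2 (measure_mono fun ω h => ne_of_gt h)
  set q : ℝ → Ω → ℝ := fun p ω => Phi p (X ω) - Phi p a - dPhi p a * (X ω - a) with hq_def
  have hPhi : ∀ p : ℝ, Integrable (fun ω => Phi p (X ω)) μ := by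
    intro p
    by_cases hp0 : p = 0
    · have he : (fun ω => Phi p (X ω)) = fun ω => -Real.log (X ω) := by
        funext ω; simp [Phi, hp0]
      rw [he]; exact hlog.neg
    by_cases hp1 : p = 1
    · have he : (fun ω => Phi p (X ω)) = fun ω => X ω * Real.log (X ω) := by
        funext ω; simp [Phi, hp0, hp1]
      rw [he]; exact hxlog
    · have he : (fun ω => Phi p (X ω)) = fun ω => (X ω ^ p) / (p * (p - 1)) := by
        funext ω; simp [Phi, hp0, hp1]
      rw [he]; exact (hmom p).div_const _
  have hq_int : ∀ p : ℝ, Integrable (q p) μ := by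
    intro p
    rw [hq_def]
    exact ((hPhi p).sub (integrable_const _)).sub
      ((hXint.sub (integrable_const a)).const_mul _)
  have h0 : ∫ ω, (X ω - a) ∂μ = 0 := by
    rw [integral_sub hXint (integrable_const a), integral_const]
    simp [ha_def]
  have hq_val : ∀ p : ℝ, ∫ ω, q p ω ∂μ = momentLambda μ X p := by
    intro p
    simp only [hq_def]
    have hA : Integrable (fun ω => Phi p (X ω) - Phi p a) μ := (hPhi p).sub (integrable_const _)
    have hB : Integrable (fun ω => dPhi p a * (X ω - a)) μ :=
      (hXint.sub (integrable_const a)).const_mul _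
    rw [integral_sub hA hB,
      integral_sub (hPhi p) (integrable_const _), integral_const_mul, h0, mul_zero, sub_zero,
      integral_const]
    simp only [probReal_univ, one_smul]
    by_cases hp0 : p = 0
    · subst hp0
      simp only [momentLambda, Phi, eq_self_iff_true, if_true]
      rw [integral_neg, ← ha_def]
      ring
    by_cases hp1 : p = 1
    · subst hp1
      simp only [momentLambda, Phi, eq_self_iff_true, if_true,
        if_neg (by norm_num : ¬(1:ℝ) = 0)]
      rw [← ha_def]
    · simp only [momentLambda, Phi, if_neg hp0, if_neg hp1]
      rw [integral_div, ← ha_def]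
      ring
  have hT : ∀ p1 p2 p3 : ℝ, Integrable (fun ω => q p1 ω - 2 * q p2 ω + q p3 ω) μ :=
    fun p1 p2 p3 => ((hq_int p1).sub ((hq_int p2).const_mul 2)).add (hq_int p3)
  have htriple : ∀ p1 p2 p3 : ℝ,
      ∫ ω, (q p1 ω - 2 * q p2 ω + q p3 ω) ∂μ
        = momentLambda μ X p1 - 2 * momentLambda μ X p2 + momentLambda μ X p3 := by
    intro p1 p2 p3
    have h1 : Integrable (fun ω => q p1 ω - 2 * q p2 ω) μ :=
      (hq_int p1).sub ((hq_int p2).const_mul 2)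
    have h2 : Integrable (fun ω => 2 * q p2 ω) μ := (hq_int p2).const_mul 2
    rw [integral_add h1 (hq_int p3), integral_sub (hq_int p1) h2, integral_const_mul,
      hq_val p1, hq_val p2, hq_val p3]
  have key_quad : ∀ l : ℝ,
      0 ≤ momentTau μ X s t * (l * l)
        + (2 * (momentTau μ X ((s + u) / 2) ((t + v) / 2)
            - momentTau μ X ((s + v) / 2) ((t + u) / 2))) * l
        + momentTau μ X u v := by
    intro l
    have hbig : momentTau μ X s t * (l * l)
        + (2 * (momentTau μ X ((s + u) / 2) ((t + v) / 2)
            - momentTau μ X ((s + v) / 2) ((t + u) / 2))) * l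
        + momentTau μ X u v
        = ∫ ω, ((l * l) * (q s ω - 2 * q ((s + t) / 2) ω + q t ω)
            + (2 * l) * ((q ((s + u) / 2) ω - 2 * q (((s + u) / 2 + (t + v) / 2) / 2) ω
                + q ((t + v) / 2) ω)
              - (q ((s + v) / 2) ω - 2 * q (((s + v) / 2 + (t + u) / 2) / 2) ω
                + q ((t + u) / 2) ω))
            + (q u ω - 2 * q ((u + v) / 2) ω + q v ω)) ∂μ := by
      have hM1 : Integrable (fun ω => (l * l) * (q s ω - 2 * q ((s + t) / 2) ω + q t ω)) μ :=
        (hT s ((s+t)/2) t).const_mul _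
      have hM2 : Integrable (fun ω =>
          (q ((s + u) / 2) ω - 2 * q (((s + u) / 2 + (t + v) / 2) / 2) ω + q ((t + v) / 2) ω)
          - (q ((s + v) / 2) ω - 2 * q (((s + v) / 2 + (t + u) / 2) / 2) ω
              + q ((t + u) / 2) ω)) μ :=
        (hT ((s+u)/2) (((s+u)/2+(t+v)/2)/2) ((t+v)/2)).sub
          (hT ((s+v)/2) (((s+v)/2+(t+u)/2)/2) ((t+u)/2))
      have hM3 : Integrable (fun ω => (2 * l) *
          ((q ((s + u) / 2) ω - 2 * q (((s + u) / 2 + (t + v) / 2) / 2) ω + q ((t + v) / 2) ω)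
          - (q ((s + v) / 2) ω - 2 * q (((s + v) / 2 + (t + u) / 2) / 2) ω
              + q ((t + u) / 2) ω))) μ := hM2.const_mul _
      have hM12 : Integrable (fun ω =>
          (l * l) * (q s ω - 2 * q ((s + t) / 2) ω + q t ω) + (2 * l) *
          ((q ((s + u) / 2) ω - 2 * q (((s + u) / 2 + (t + v) / 2) / 2) ω + q ((t + v) / 2) ω)
          - (q ((s + v) / 2) ω - 2 * q (((s + v) / 2 + (t + u) / 2) / 2) ω
              + q ((t + u) / 2) ω))) μ := hM1.add hM3
      rw [integral_add hM12 (hT u ((u+v)/2) v),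
        integral_add hM1 hM3,
        integral_const_mul, integral_const_mul,
        integral_sub (hT ((s+u)/2) (((s+u)/2+(t+v)/2)/2) ((t+v)/2))
          (hT ((s+v)/2) (((s+v)/2+(t+u)/2)/2) ((t+u)/2)),
        htriple s ((s+t)/2) t,
        htriple ((s+u)/2) (((s+u)/2+(t+v)/2)/2) ((t+v)/2),
        htriple ((s+v)/2) (((s+v)/2+(t+u)/2)/2) ((t+u)/2),
        htriple u ((u+v)/2) v]
      simp only [momentTau]
      ring
    rw [hbig]
    apply integral_nonneg_of_ae
    filter_upwards [hpos] with ω hxω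
    simp only [hq_def]
    rw [← key a (X ω) ha hxω s, ← key a (X ω) ha hxω ((s+t)/2), ← key a (X ω) ha hxω t,
      ← key a (X ω) ha hxω ((s+u)/2), ← key a (X ω) ha hxω (((s+u)/2+(t+v)/2)/2),
      ← key a (X ω) ha hxω ((t+v)/2), ← key a (X ω) ha hxω ((s+v)/2),
      ← key a (X ω) ha hxω (((s+v)/2+(t+u)/2)/2), ← key a (X ω) ha hxω ((t+u)/2),
      ← key a (X ω) ha hxω u, ← key a (X ω) ha hxω ((u+v)/2), ← key a (X ω) ha hxω v]
    exact quad_nonneg a (X ω) ha hxω l s t u v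
  have hd := discrim_le_zero key_quad
  rw [discrim] at hd
  nlinarith [hd]
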